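/- (Bayat's generalization of Wolstenholme's theorem) Let m be a positive integer and p a prime with p ≥ m+3. Then ∑_{k=1}^{p-1} 1/k^m ≡ 0 mod p if m is even, and ∑_{k=1}^{p-1} 1/k^m ≡ 0 mod p² if m is odd. -/

import Mathlib

open Finset

lemma aux_sq_zero_add_pow {R : Type*} [CommRing R] (a x : R) (h : x * x = 0) :
    ∀ n : ℕ, 1 ≤ n → (a + x) ^ n = a ^ n + n * a ^ (n - 1) * x := by
  intro n hn
  induction n with
  | zero => omega
  | succ n ih =>
    rcases Nat.lt_or_ge 1 (n+1) with h1 | h1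
    · have hn' : 1 ≤ n := by omega
      have hpow : a ^ (n - 1) * a = a ^ n := by
        rw [← pow_succ]; congr 1; omega
      calc (a + x) ^ (n + 1) = (a ^ n + n * a ^ (n - 1) * x) * (a + x) := by
            rw [pow_succ, ih hn']
        _ = a ^ n * a + (a ^ n) * x + (n : R) * (a ^ (n - 1) * a) * x
              + (n : R) * a ^ (n - 1) * (x * x) := by ring
        _ = a ^ (n + 1) + (↑(n + 1)) * a ^ (n + 1 - 1) * x := by
            rw [h, hpow, ← pow_succ]; push_cast; ring
    · have hn0 : n = 0 := by omega
      subst hn0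
      simp

lemma aux_field_sum (p : ℕ) [hp : Fact p.Prime] (n : ℕ) (hn : 1 ≤ n) (hnp : n < p - 1) :
    ∑ k ∈ Icc 1 (p - 1), ((k : ZMod p) ^ n)⁻¹ = 0 := by
  have hp1 : 1 < p := hp.out.one_lt
  have h1 : ∑ k ∈ Icc 1 (p - 1), ((k : ZMod p) ^ n)⁻¹
      = ∑ x ∈ (Finset.univ : Finset (ZMod p)).erase 0, (x ^ n)⁻¹ := by
    refine Finset.sum_nbij' (fun k => (k : ZMod p)) (fun x => x.val) ?_ ?_ ?_ ?_ ?_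
    · intro k hk
      simp only [mem_Icc] at hk
      have : (k : ZMod p) ≠ 0 := by
        rw [Ne, ZMod.natCast_eq_zero_iff]
        intro hdvd
        have := Nat.le_of_dvd (by omega) hdvd
        omega
      simp [this]
    · intro x hx
      simp only [mem_erase, mem_univ, and_true] at hx
      have : x.val ≠ 0 := by
        rw [Ne, ZMod.val_eq_zero]; exact hx
      have hlt : x.val < p := x.val_lt
      simp only [mem_Icc]
      omega
    · intro k hk
      simp only [mem_Icc] at hk
      exact ZMod.val_cast_of_lt (by omega)
    · intro x _
      exact ZMod.natCast_rightInverse x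
    · intro k _
      rfl
  rw [h1, Finset.sum_erase _ (by simp [zero_pow (by omega : n ≠ 0)])]
  have h2 : ∑ x : ZMod p, (x ^ n)⁻¹ = ∑ x : ZMod p, x ^ n :=
    Fintype.sum_bijective Inv.inv inv_involutive.bijective _ _
      (fun x => by rw [inv_pow])
  rw [h2]
  exact FiniteField.sum_pow_lt_card_sub_one (K := ZMod p) n (by rw [ZMod.card]; omega)

theorem stmt_8 (p m : ℕ) [hp : Fact p.Prime] (hm : 1 ≤ m) (hpm : m + 3 ≤ p) :
    (Even m → ∃ z : ℤ_[p],
      (∑ k ∈ Finset.Icc 1 (p - 1), 1 / (k : ℚ_[p]) ^ m) = (p : ℚ_[p]) * z) ∧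
    (Odd m → ∃ z : ℤ_[p],
      (∑ k ∈ Finset.Icc 1 (p - 1), 1 / (k : ℚ_[p]) ^ m) = (p : ℚ_[p]) ^ 2 * z) := by
  classical
  have hp1 : 1 < p := hp.out.one_lt
  -- basic facts about k in the range
  have hnd : ∀ k ∈ Icc 1 (p - 1), ¬ p ∣ k := by
    intro k hk hdvd
    simp only [mem_Icc] at hk
    have := Nat.le_of_dvd (by omega) hdvd
    omega
  have hknorm : ∀ k ∈ Icc 1 (p - 1), ‖(k : ℚ_[p])‖ = 1 := by
    intro k hk
    have hle : ‖((k : ℤ) : ℚ_[p])‖ ≤ 1 := Padic.norm_int_le_one _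
    have hnlt : ¬ ‖((k : ℤ) : ℚ_[p])‖ < 1 := by
      rw [Padic.norm_intCast_lt_one_iff]
      exact_mod_cast hnd k hk
    have h1 : ‖((k : ℤ) : ℚ_[p])‖ = 1 := le_antisymm hle (not_lt.mp hnlt)
    simpa using h1
  have htnorm : ∀ k ∈ Icc 1 (p - 1), ‖1 / (k : ℚ_[p]) ^ m‖ ≤ 1 := by
    intro k hk
    rw [one_div, norm_inv, norm_pow, hknorm k hk]
    simp
  have hk0 : ∀ k ∈ Icc 1 (p - 1), (k : ℚ_[p]) ≠ 0 := by
    intro k hk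
    intro h0
    have := hknorm k hk
    rw [h0] at this
    simp at this
  -- padic integer valued terms
  set t : ℕ → ℤ_[p] := fun k =>
    if h : ‖1 / (k : ℚ_[p]) ^ m‖ ≤ 1 then (⟨1 / (k : ℚ_[p]) ^ m, h⟩ : ℤ_[p]) else 0 with ht
  have htcoe : ∀ k ∈ Icc 1 (p - 1), ((t k : ℤ_[p]) : ℚ_[p]) = 1 / (k : ℚ_[p]) ^ m := by
    intro k hk
    simp only [ht]
    exact congrArg (fun x : ℤ_[p] => (x : ℚ_[p])) (dif_pos (htnorm k hk))
  set T : ℤ_[p] := ∑ k ∈ Icc 1 (p - 1), t k with hT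
  have hTcoe : (∑ k ∈ Icc 1 (p - 1), 1 / (k : ℚ_[p]) ^ m) = (T : ℚ_[p]) := by
    rw [hT, show ((∑ k ∈ Icc 1 (p - 1), t k : ℤ_[p]) : ℚ_[p])
        = ∑ k ∈ Icc 1 (p - 1), ((t k : ℤ_[p]) : ℚ_[p]) from
      map_sum (PadicInt.Coe.ringHom) _ _]
    exact Finset.sum_congr rfl fun k hk => (htcoe k hk).symm
  have hunit : ∀ k ∈ Icc 1 (p - 1), t k * (k : ℤ_[p]) ^ m = 1 := by
    intro k hk
    apply Subtype.ext
    show ((t k : ℤ_[p]) : ℚ_[p]) * (((k : ℤ_[p]) : ℚ_[p])) ^ m = 1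
    rw [htcoe k hk, PadicInt.coe_natCast]
    exact one_div_mul_cancel (pow_ne_zero _ (hk0 k hk))
  constructor
  · -- even case
    intro _
    have hker : PadicInt.toZMod T = 0 := by
      rw [hT, map_sum]
      have hcong : ∀ k ∈ Icc 1 (p - 1),
          PadicInt.toZMod (t k) = ((k : ZMod p) ^ m)⁻¹ := by
        intro k hk
        have h1 : PadicInt.toZMod (t k) * (k : ZMod p) ^ m = 1 := by
          have := congrArg PadicInt.toZMod (hunit k hk)
          simpa [map_mul, map_pow, map_natCast] using this
        exact eq_inv_of_mul_eq_one_left h1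
      rw [Finset.sum_congr rfl hcong]
      exact aux_field_sum p m hm (by omega)
    have hmem : T ∈ Ideal.span {(p : ℤ_[p])} := by
      rw [← PadicInt.maximalIdeal_eq_span_p, ← PadicInt.ker_toZMod]
      exact hker
    obtain ⟨z, hz⟩ := Ideal.mem_span_singleton'.mp hmem
    refine ⟨z, ?_⟩
    rw [hTcoe, ← hz, PadicInt.coe_mul, PadicInt.coe_natCast]
    ring
  · -- odd case
    intro hmodd
    obtain ⟨m', rfl⟩ : ∃ m', m = m' + 1 := ⟨m - 1, by omega⟩
    have hme : Even m' := by
      simpa using Nat.Odd.sub_odd hmodd odd_one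
    haveI : NeZero (p ^ 2) := ⟨by positivity⟩
    set R' := ZMod (p ^ 2)
    set c : ZMod (p ^ 2) := (p : ZMod (p ^ 2)) with hcdef
    have hc : c * c = 0 := by
      rw [hcdef, ← Nat.cast_mul, ← pow_two, ZMod.natCast_self]
    set G : ℕ → ZMod (p ^ 2) := fun k => PadicInt.toZModPow 2 (t k) with hGdef
    have hG : ∀ k ∈ Icc 1 (p - 1), G k * (k : ZMod (p ^ 2)) ^ (m' + 1) = 1 := by
      intro k hk
      have := congrArg (PadicInt.toZModPow 2) (hunit k hk)
      simpa [hGdef, map_mul, map_pow, map_natCast] using this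
    have hcop : ∀ k ∈ Icc 1 (p - 1), IsUnit ((k : ZMod (p ^ 2))) := by
      intro k hk
      rw [ZMod.isUnit_iff_coprime]
      exact (Nat.coprime_comm.mp (hp.out.coprime_iff_not_dvd.mpr (hnd k hk))).pow_right 2
    set H : ℕ → ZMod (p ^ 2) := fun k => (((k : ZMod (p ^ 2)) ^ (m' + 2))⁻¹) with hHdef
    have hH : ∀ k ∈ Icc 1 (p - 1), H k * (k : ZMod (p ^ 2)) ^ (m' + 2) = 1 := by
      intro k hk
      exact ZMod.inv_mul_of_unit _ ((hcop k hk).pow _)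
    have hpk : ∀ k ∈ Icc 1 (p - 1), p - k ∈ Icc 1 (p - 1) := by
      intro k hk
      simp only [mem_Icc] at *
      omega
    -- reindexing by k ↦ p - k
    have hre : ∑ k ∈ Icc 1 (p - 1), G k = ∑ k ∈ Icc 1 (p - 1), G (p - k) := by
      refine Finset.sum_nbij' (fun k => p - k) (fun k => p - k) ?_ ?_ ?_ ?_ ?_ <;>
        intro k hk <;> simp only [mem_Icc] at *
      · omega
      · omega
      · omega
      · omega
      · congr 1; omega
    set S : ZMod (p ^ 2) := ∑ k ∈ Icc 1 (p - 1), G k with hSdef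
    -- the pairing identity
    have hterm : ∀ k ∈ Icc 1 (p - 1),
        G k + G (p - k) = -(((m' : ZMod (p ^ 2)) + 1) * c * H k) := by
      intro k hk
      set a : ZMod (p ^ 2) := (k : ZMod (p ^ 2)) with hadef
      have hkle : k ≤ p := by simp only [mem_Icc] at hk; omega
      have hcast : ((p - k : ℕ) : ZMod (p ^ 2)) = c - a := by
        rw [Nat.cast_sub hkle]
      have h1 : G k * a ^ (m' + 1) = 1 := hG k hk
      have h2 : G (p - k) * (c - a) ^ (m' + 1) = 1 := by
        have := hG (p - k) (hpk k hk)
        rwa [hcast] at this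
      have hHk : H k * a ^ (m' + 2) = 1 := hH k hk
      have hexp : (c - a) ^ (m' + 1)
          = -(a ^ (m' + 1)) + ((m' : ZMod (p ^ 2)) + 1) * a ^ m' * c := by
        have h3 : (c - a) ^ (m' + 1) = (-a + c) ^ (m' + 1) := by ring_nf
        rw [h3, aux_sq_zero_add_pow (-a) c hc (m' + 1) (by omega)]
        rw [show (m' + 1) - 1 = m' from rfl, Odd.neg_pow hmodd, Even.neg_pow hme]
        push_cast
        ring
      have h12 : (G k * a ^ (m' + 1)) * (G (p - k) * (c - a) ^ (m' + 1)) = 1 := by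
        rw [h1, h2, mul_one]
      have hcu : c * (G k * G (p - k)) * a ^ (2 * m' + 2) = -c := by
        linear_combination (c * (G k) * (G (p - k)) * a ^ (m' + 1)) * hexp
          - c * h12
          + (((m' : ZMod (p ^ 2)) + 1) * (G k) * (G (p - k)) * a ^ (2 * m' + 1)) * hc
      linear_combination (-(G k)) * h2 + (-(G (p - k))) * h1
        + ((G k) * (G (p - k))) * hexp
        + (((m' : ZMod (p ^ 2)) + 1) * H k) * hcu
        + (-(((m' : ZMod (p ^ 2)) + 1) * c * (G k) * (G (p - k)) * a ^ m')) * hHk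
    -- the inner sum is divisible by c
    have hw : ∃ w : ZMod (p ^ 2), (∑ k ∈ Icc 1 (p - 1), H k) = c * w := by
      set Sg : ZMod (p ^ 2) := ∑ k ∈ Icc 1 (p - 1), H k with hSgdef
      have hpd : p ∣ p ^ 2 := dvd_pow_self p two_ne_zero
      set f : ZMod (p ^ 2) →+* ZMod p := ZMod.castHom hpd (ZMod p) with hfdef
      have hfSg : f Sg = 0 := by
        rw [hSgdef, map_sum]
        have hcong : ∀ k ∈ Icc 1 (p - 1), f (H k) = ((k : ZMod p) ^ (m' + 2))⁻¹ := by
          intro k hk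
          have h1 : f (H k) * (k : ZMod p) ^ (m' + 2) = 1 := by
            have := congrArg f (hH k hk)
            simpa [map_mul, map_pow, map_natCast] using this
          exact eq_inv_of_mul_eq_one_left h1
        rw [Finset.sum_congr rfl hcong]
        exact aux_field_sum p (m' + 2) (by omega) (by omega)
      have hval : ((Sg.val : ℕ) : ZMod p) = 0 := by
        have h4 : Sg = ((Sg.val : ℕ) : ZMod (p ^ 2)) := (ZMod.natCast_rightInverse Sg).symm
        rw [h4, map_natCast] at hfSg
        exact hfSg
      rw [ZMod.natCast_eq_zero_iff] at hval
      obtain ⟨w0, hw0⟩ := hval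
      refine ⟨(w0 : ZMod (p ^ 2)), ?_⟩
      have h4 : Sg = ((Sg.val : ℕ) : ZMod (p ^ 2)) := (ZMod.natCast_rightInverse Sg).symm
      rw [h4, hw0]
      push_cast
      rfl
    obtain ⟨w, hw⟩ := hw
    have h2S : 2 * S = 0 := by
      have e1 : 2 * S = ∑ k ∈ Icc 1 (p - 1), (G k + G (p - k)) := by
        rw [Finset.sum_add_distrib, ← hre, hSdef]; ring
      rw [e1, Finset.sum_congr rfl hterm, Finset.sum_neg_distrib, ← Finset.mul_sum, hw]
      linear_combination (-(((m' : ZMod (p ^ 2)) + 1) * w)) * hc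
    have hu2 : IsUnit (2 : ZMod (p ^ 2)) := by
      have : ((2 : ℕ) : ZMod (p ^ 2)) = 2 := by norm_num
      rw [← this, ZMod.isUnit_iff_coprime]
      have hpodd : Odd p := hp.out.odd_of_ne_two (by omega)
      have : Odd (p ^ 2) := hpodd.pow
      exact this.coprime_two_left
    have hS0 : S = 0 := (hu2.mul_right_eq_zero).mp h2S
    have hker : PadicInt.toZModPow 2 T = 0 := by
      rw [hT, map_sum]
      exact hS0
    have hmem : T ∈ Ideal.span {(p : ℤ_[p]) ^ 2} := by
      rw [← PadicInt.ker_toZModPow]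
      exact hker
    obtain ⟨z, hz⟩ := Ideal.mem_span_singleton'.mp hmem
    refine ⟨z, ?_⟩
    rw [hTcoe, ← hz, PadicInt.coe_mul, PadicInt.coe_pow, PadicInt.coe_natCast]
    ring
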